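/- Zhao's inequality: For every finite undirected simple graph G, the number of independent sets satisfies |I(G)|^2 ≤ |I(G × K_2)|, where G × K_2 is the bipartite double cover of G. -/

import Mathlib

/-- The finite set of all independent sets of a finite graph `G`
(including the empty set): subsets of vertices no two of which are adjacent. -/
def indSets {V : Type*} [Fintype V] [DecidableEq V]
    (G : SimpleGraph V) [DecidableRel G.Adj] : Finset (Finset V) :=
  Finset.univ.filter fun s => ∀ u ∈ s, ∀ v ∈ s, ¬ G.Adj u v

/-- The bipartite double cover `G × K₂` of a graph `G`: its vertices are pairs `(v, i)`
with `v ∈ V(G)` and `i ∈ {0,1}`, and `(u, i)` is adjacent to `(v, j)` iff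
`(u,v) ∈ E(G)` and `i ≠ j`. -/
def doubleCover {V : Type*} (G : SimpleGraph V) : SimpleGraph (V × Bool) where
  Adj x y := G.Adj x.1 y.1 ∧ x.2 ≠ y.2
  symm := ⟨fun x y h => ⟨h.1.symm, h.2.symm⟩⟩
  loopless := ⟨fun x h => h.2 rfl⟩

instance {V : Type*} (G : SimpleGraph V) [DecidableRel G.Adj] :
    DecidableRel (doubleCover G).Adj :=
  fun x y => inferInstanceAs (Decidable (G.Adj x.1 y.1 ∧ x.2 ≠ y.2))

namespace ZhaoAux

set_option linter.unusedVariables false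
set_option linter.unusedSectionVars false

/- Pure propositional helper lemmas (so that `tauto` never touches heavy terms). -/

lemma L_step {ua ub xa xb : Prop} (h1 : (ua ∧ ¬ub) ∨ (ub ∧ ¬ua))
    (h2 : (xa ∧ ¬xb) ∨ (xb ∧ ¬xa)) (hAc : ¬(ua ∧ xa)) (hBc : ¬(ub ∧ xb)) :
    (ua ↔ ¬xa) := by tauto

lemma L_par {p q r p' q' r' : Prop} (s1 : p ↔ ¬q) (s2 : p' ↔ ¬q')
    (ih : (q ↔ r) ↔ (q' ↔ r')) : ((p ↔ r) ↔ (p' ↔ r')) := by tauto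

lemma L_inter {a b d ma mb : Prop} (h1 : d → ¬(ma ∧ mb)) :
    ((a ∧ b) ∨ (d ∧ ma)) ∧ ((a ∧ b) ∨ (d ∧ mb)) ↔ (a ∧ b) := by tauto

lemma L_union {a b d ma mb : Prop} (h1 : d → (ma ∨ mb))
    (h2 : d ↔ (a ∧ ¬b) ∨ (b ∧ ¬a)) :
    (((a ∧ b) ∨ (d ∧ ma)) ∨ ((a ∧ b) ∨ (d ∧ mb))) ↔ (a ∨ b) := by tauto

lemma L_sel {a b d ma s : Prop} (hs : s ↔ (a ∧ b) ∨ (d ∧ ma))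
    (hd : d) (hab : ¬(a ∧ b)) : (s ↔ ma) := by tauto

lemma L_final {p q p' q' : Prop} (hpar : (p ↔ q) ↔ (p' ↔ q')) (hq : q ↔ q') :
    (p ↔ p') := by tauto

lemma L_notD {a b a' b' : Prop} (h1 : ¬((a ∧ ¬b) ∨ (b ∧ ¬a)))
    (h2 : ¬((a' ∧ ¬b') ∨ (b' ∧ ¬a'))) (h3 : (a ∧ b) ↔ (a' ∧ b')) :
    (a ↔ a') := by tauto

lemma L_B {a b a' b' : Prop} (h4 : (a ∧ b) ↔ (a' ∧ b')) (h5 : (a ∨ b) ↔ (a' ∨ b'))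
    (h6 : a ↔ a') : (b ↔ b') := by tauto

variable {V : Type*} [Fintype V] [DecidableEq V] (G : SimpleGraph V) [DecidableRel G.Adj]

/-- The graph `G` restricted to a vertex set `D`. -/
def H (D : Finset V) : SimpleGraph V where
  Adj u v := G.Adj u v ∧ u ∈ D ∧ v ∈ D
  symm := ⟨fun u v h => ⟨h.1.symm, h.2.2, h.2.1⟩⟩
  loopless := ⟨fun u h => G.irrefl h.1⟩

/-- Canonical representative of the connected component of `v` in `H G D`. -/
noncomputable def rep (D : Finset V) (v : V) : V :=
  Quot.out ((H G D).connectedComponentMk v)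

lemma reachable_rep (D : Finset V) (v : V) : (H G D).Reachable v (rep G D v) := by
  rw [← SimpleGraph.ConnectedComponent.eq]
  exact (Quot.out_eq _).symm

lemma rep_eq_of_reachable {D : Finset V} {u v : V} (h : (H G D).Reachable u v) :
    rep G D u = rep G D v := by
  unfold rep
  rw [SimpleGraph.ConnectedComponent.eq.mpr h]

lemma end_mem_of_walk {D : Finset V} {v w : V} (p : (H G D).Walk v w) :
    w = v ∨ w ∈ D := by
  induction p with
  | nil => exact Or.inl rfl
  | cons h p ih =>
    rcases ih with rfl | hw
    · exact Or.inr h.2.2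
    · exact Or.inr hw

lemma mem_D_of_reachable {D : Finset V} {v w : V} (h : (H G D).Reachable v w)
    (hv : v ∈ D) : w ∈ D := by
  obtain ⟨p⟩ := h
  rcases end_mem_of_walk G p with rfl | hw
  · exact hv
  · exact hw

lemma rep_mem_D {D : Finset V} {v : V} (hv : v ∈ D) : rep G D v ∈ D :=
  mem_D_of_reachable G (reachable_rep G D v) hv

/-- Along an edge within `D = A △ B`, membership in `A` flips. -/
lemma step {A B D : Finset V} (hA : ∀ u ∈ A, ∀ v ∈ A, ¬ G.Adj u v)
    (hB : ∀ u ∈ B, ∀ v ∈ B, ¬ G.Adj u v)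
    (hD : ∀ x, x ∈ D ↔ (x ∈ A ∧ x ∉ B) ∨ (x ∈ B ∧ x ∉ A))
    {u x : V} (h : (H G D).Adj u x) : (u ∈ A ↔ x ∉ A) := by
  obtain ⟨hadj, hu, hx⟩ := h
  exact L_step ((hD u).mp hu) ((hD x).mp hx)
    (fun ⟨a, b⟩ => hA u a x b hadj) (fun ⟨a, b⟩ => hB u a x b hadj)

/-- Parities of two proper 2-colorings along a walk agree. -/
lemma parity {A B A' B' D : Finset V}
    (hA : ∀ u ∈ A, ∀ v ∈ A, ¬ G.Adj u v) (hB : ∀ u ∈ B, ∀ v ∈ B, ¬ G.Adj u v)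
    (hA' : ∀ u ∈ A', ∀ v ∈ A', ¬ G.Adj u v) (hB' : ∀ u ∈ B', ∀ v ∈ B', ¬ G.Adj u v)
    (hD : ∀ x, x ∈ D ↔ (x ∈ A ∧ x ∉ B) ∨ (x ∈ B ∧ x ∉ A))
    (hD' : ∀ x, x ∈ D ↔ (x ∈ A' ∧ x ∉ B') ∨ (x ∈ B' ∧ x ∉ A'))
    {u w : V} (h : (H G D).Reachable u w) :
    ((u ∈ A ↔ w ∈ A) ↔ (u ∈ A' ↔ w ∈ A')) := by
  obtain ⟨p⟩ := h
  induction p with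
  | nil => exact iff_of_true Iff.rfl Iff.rfl
  | cons hadj p ih =>
    exact L_par (step G hA hB hD hadj) (step G hA' hB' hD' hadj) ih

/-- The symmetric difference. -/
def Dset (A B : Finset V) : Finset V := (A \ B) ∪ (B \ A)

lemma mem_Dset {A B : Finset V} (x : V) :
    x ∈ Dset A B ↔ (x ∈ A ∧ x ∉ B) ∨ (x ∈ B ∧ x ∉ A) := by
  simp [Dset, Finset.mem_union, Finset.mem_sdiff]

/-- First coordinate set of the image pair. -/
noncomputable def Sset (A B : Finset V) : Finset V :=
  (A ∩ B) ∪ (Dset A B).filter (fun v => rep G (Dset A B) v ∈ A)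

/-- Second coordinate set of the image pair. -/
noncomputable def Tset (A B : Finset V) : Finset V :=
  (A ∩ B) ∪ (Dset A B).filter (fun v => rep G (Dset A B) v ∈ B)

lemma mem_Sset {A B : Finset V} (v : V) :
    v ∈ Sset G A B ↔ (v ∈ A ∧ v ∈ B) ∨ (v ∈ Dset A B ∧ rep G (Dset A B) v ∈ A) := by
  simp [Sset, Finset.mem_union, Finset.mem_filter, Finset.mem_inter]

lemma mem_Tset {A B : Finset V} (v : V) :
    v ∈ Tset G A B ↔ (v ∈ A ∧ v ∈ B) ∨ (v ∈ Dset A B ∧ rep G (Dset A B) v ∈ B) := by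
  simp [Tset, Finset.mem_union, Finset.mem_filter, Finset.mem_inter]

/-- The map into independent sets of the double cover. -/
noncomputable def fmap (A B : Finset V) : Finset (V × Bool) :=
  (Sset G A B).image (fun v => (v, false)) ∪ (Tset G A B).image (fun v => (v, true))

lemma mem_fmap_false {A B : Finset V} (v : V) :
    (v, false) ∈ fmap G A B ↔ v ∈ Sset G A B := by
  simp [fmap, Finset.mem_union, Finset.mem_image]

lemma mem_fmap_true {A B : Finset V} (v : V) :
    (v, true) ∈ fmap G A B ↔ v ∈ Tset G A B := by
  simp [fmap, Finset.mem_union, Finset.mem_image]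

lemma no_cross {A B : Finset V}
    (hA : ∀ u ∈ A, ∀ v ∈ A, ¬ G.Adj u v) (hB : ∀ u ∈ B, ∀ v ∈ B, ¬ G.Adj u v)
    {u v : V} (hu : u ∈ Sset G A B) (hv : v ∈ Tset G A B) (hadj : G.Adj u v) :
    False := by
  rw [mem_Sset] at hu
  rw [mem_Tset] at hv
  rcases hu with ⟨huA, huB⟩ | ⟨huD, hmA⟩
  · rcases hv with ⟨hvA, hvB⟩ | ⟨hvD, hmB⟩
    · exact hA u huA v hvA hadj
    · rcases (mem_Dset v).mp hvD with ⟨h1, _⟩ | ⟨h1, _⟩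
      · exact hA u huA v h1 hadj
      · exact hB u huB v h1 hadj
  · rcases hv with ⟨hvA, hvB⟩ | ⟨hvD, hmB⟩
    · rcases (mem_Dset u).mp huD with ⟨h1, _⟩ | ⟨h1, _⟩
      · exact hA u h1 v hvA hadj
      · exact hB u h1 v hvB hadj
    · have hHadj : (H G (Dset A B)).Adj u v := ⟨hadj, huD, hvD⟩
      have hre : rep G (Dset A B) u = rep G (Dset A B) v :=
        rep_eq_of_reachable G hHadj.reachable
      have hmD : rep G (Dset A B) u ∈ Dset A B := rep_mem_D G huD
      rw [hre] at hmA hmD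
      rcases (mem_Dset _).mp hmD with ⟨_, h2⟩ | ⟨_, h2⟩
      · exact h2 hmB
      · exact h2 hmA

lemma fmap_mem {A B : Finset V}
    (hA : ∀ u ∈ A, ∀ v ∈ A, ¬ G.Adj u v) (hB : ∀ u ∈ B, ∀ v ∈ B, ¬ G.Adj u v) :
    fmap G A B ∈ indSets (doubleCover G) := by
  rw [indSets, Finset.mem_filter]
  refine ⟨Finset.mem_univ _, ?_⟩
  rintro ⟨u, bu⟩ hu ⟨v, bv⟩ hv ⟨hadj, hne⟩
  dsimp at hadj hne
  match bu, bv with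
  | false, false => exact hne rfl
  | true, true => exact hne rfl
  | false, true =>
    exact no_cross G hA hB ((mem_fmap_false G u).mp hu) ((mem_fmap_true G v).mp hv) hadj
  | true, false =>
    exact no_cross G hA hB ((mem_fmap_false G v).mp hv) ((mem_fmap_true G u).mp hu) hadj.symm

lemma inter_eq {A B : Finset V} :
    Sset G A B ∩ Tset G A B = A ∩ B := by
  ext v
  rw [Finset.mem_inter, mem_Sset, mem_Tset, Finset.mem_inter]
  refine L_inter (fun hd hm => ?_)
  have hmD : rep G (Dset A B) v ∈ Dset A B := rep_mem_D G hd
  rcases (mem_Dset _).mp hmD with ⟨_, h2⟩ | ⟨_, h2⟩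
  · exact h2 hm.2
  · exact h2 hm.1

lemma union_eq {A B : Finset V} :
    Sset G A B ∪ Tset G A B = A ∪ B := by
  ext v
  rw [Finset.mem_union, mem_Sset, mem_Tset, Finset.mem_union]
  refine L_union (fun hd => ?_) (mem_Dset v)
  have hmD : rep G (Dset A B) v ∈ Dset A B := rep_mem_D G hd
  rcases (mem_Dset _).mp hmD with ⟨h, _⟩ | ⟨h, _⟩
  · exact Or.inl h
  · exact Or.inr h

lemma Dset_eq_sdiff (A B : Finset V) : Dset A B = (A ∪ B) \ (A ∩ B) := by
  ext v
  rw [mem_Dset, Finset.mem_sdiff, Finset.mem_union, Finset.mem_inter]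
  tauto

lemma fmap_inj {A B A' B' : Finset V}
    (hA : ∀ u ∈ A, ∀ v ∈ A, ¬ G.Adj u v) (hB : ∀ u ∈ B, ∀ v ∈ B, ¬ G.Adj u v)
    (hA' : ∀ u ∈ A', ∀ v ∈ A', ¬ G.Adj u v) (hB' : ∀ u ∈ B', ∀ v ∈ B', ¬ G.Adj u v)
    (heq : fmap G A B = fmap G A' B') : A = A' ∧ B = B' := by
  have hS : Sset G A B = Sset G A' B' := by
    ext v
    rw [← mem_fmap_false G v, ← mem_fmap_false G v, heq]
  have hT : Tset G A B = Tset G A' B' := by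
    ext v
    rw [← mem_fmap_true G v, ← mem_fmap_true G v, heq]
  have hI : A ∩ B = A' ∩ B' := by
    rw [← inter_eq G (A := A) (B := B), ← inter_eq G (A := A') (B := B'), hS, hT]
  have hU : A ∪ B = A' ∪ B' := by
    rw [← union_eq G (A := A) (B := B), ← union_eq G (A := A') (B := B'), hS, hT]
  have hD : Dset A B = Dset A' B' := by
    rw [Dset_eq_sdiff, Dset_eq_sdiff, hI, hU]
  have hIv : ∀ v : V, (v ∈ A ∧ v ∈ B) ↔ (v ∈ A' ∧ v ∈ B') := by
    intro v
    rw [← Finset.mem_inter, ← Finset.mem_inter, hI]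
  have hAA : A = A' := by
    ext v
    by_cases hvD : v ∈ Dset A B
    · have hvD' : v ∈ Dset A' B' := hD ▸ hvD
      have hreach : (H G (Dset A B)).Reachable v (rep G (Dset A B) v) :=
        reachable_rep G _ v
      have hpar := parity G hA hB hA' hB' (fun x => mem_Dset x)
        (fun x => by rw [hD]; exact mem_Dset x) hreach
      have hvAB : ¬ (v ∈ A ∧ v ∈ B) := by
        rcases (mem_Dset v).mp hvD with ⟨_, h⟩ | ⟨_, h⟩ <;> tauto
      have hvAB' : ¬ (v ∈ A' ∧ v ∈ B') := fun h => hvAB ((hIv v).mpr h)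
      have e1 : v ∈ Sset G A B ↔ rep G (Dset A B) v ∈ A :=
        L_sel (mem_Sset G v) hvD hvAB
      have e2 : v ∈ Sset G A' B' ↔ rep G (Dset A B) v ∈ A' := by
        have := L_sel (mem_Sset G (A := A') (B := B') v) hvD' hvAB'
        rwa [← hD] at this
      have hmm : rep G (Dset A B) v ∈ A ↔ rep G (Dset A B) v ∈ A' := by
        rw [← e1, ← e2, hS]
      exact L_final hpar hmm
    · have hvD' : v ∉ Dset A' B' := hD ▸ hvD
      exact L_notD ((mem_Dset v).not.mp hvD) ((mem_Dset v).not.mp hvD') (hIv v)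
  refine ⟨hAA, ?_⟩
  ext v
  have h5 : v ∈ A ∪ B ↔ v ∈ A' ∪ B' := by rw [hU]
  rw [Finset.mem_union, Finset.mem_union] at h5
  exact L_B (hIv v) h5 (by rw [hAA])

end ZhaoAux

/-- **Zhao's inequality.** For every finite simple graph `G`, the number of independent
sets satisfies `|I(G)|² ≤ |I(G × K₂)|`, where `G × K₂` is the bipartite double cover. -/
theorem zhao_inequality {V : Type*} [Fintype V] [DecidableEq V]
    (G : SimpleGraph V) [DecidableRel G.Adj] :
    (indSets G).card ^ 2 ≤ (indSets (doubleCover G)).card := by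
  classical
  have hmem : ∀ s ∈ indSets G, ∀ u ∈ s, ∀ v ∈ s, ¬ G.Adj u v := by
    intro s hs
    rw [indSets, Finset.mem_filter] at hs
    exact hs.2
  have hcard : (indSets G).card ^ 2 = ((indSets G) ×ˢ (indSets G)).card := by
    rw [Finset.card_product]; ring
  rw [hcard]
  apply Finset.card_le_card_of_injOn (fun p => ZhaoAux.fmap G p.1 p.2)
  · rintro ⟨A, B⟩ hp
    rw [Finset.mem_coe, Finset.mem_product] at hp
    exact ZhaoAux.fmap_mem G (hmem A hp.1) (hmem B hp.2)
  · rintro ⟨A, B⟩ hp ⟨A', B'⟩ hp' heq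
    rw [Finset.mem_coe, Finset.mem_product] at hp hp'
    obtain ⟨h1, h2⟩ := ZhaoAux.fmap_inj G (hmem A hp.1) (hmem B hp.2)
      (hmem A' hp'.1) (hmem B' hp'.2) heq
    rw [h1, h2]
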